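/- For nonnegative integer n, the polynomial identity ∏_{i=1}^{n} (1+q^i) = 1 + ∑_{i odd, 1 ≤ i ≤ n} q^i ∑_{j=0}^{n-i} q^{binom(j+1,2)} · qbinom(i+j, i) holds, where qbinom denotes the Gaussian binomial coefficient. -/

import Mathlib

open Polynomial

/-- The Gaussian binomial coefficient as a polynomial in `q`, defined via the
q-Pascal recurrence `qbinom (a+1) (b+1) = qbinom a b + q^(b+1) * qbinom a (b+1)`. -/
noncomputable def qbinom : ℕ → ℕ → Polynomial ℤ
  | _, 0 => 1
  | 0, _ + 1 => 0
  | a + 1, b + 1 => qbinom a b + X ^ (b + 1) * qbinom a (b + 1)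


lemma qbinom_zero_right (a : ℕ) : qbinom a 0 = 1 := by cases a <;> rfl

lemma qbinom_succ_succ (a b : ℕ) :
    qbinom (a+1) (b+1) = qbinom a b + X ^ (b+1) * qbinom a (b+1) := rfl

lemma qbinom_eq_zero : ∀ {a b : ℕ}, a < b → qbinom a b = 0
  | 0, _+1, _ => rfl
  | a+1, b+1, h => by
      rw [qbinom_succ_succ, qbinom_eq_zero (show a < b by omega),
        qbinom_eq_zero (show a < b+1 by omega)]
      ring

lemma qbinom_self : ∀ a : ℕ, qbinom a a = 1
  | 0 => rfl
  | a+1 => by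
      rw [qbinom_succ_succ, qbinom_self a, qbinom_eq_zero (by omega)]
      ring

lemma qbinom_succ_succ' : ∀ (a b : ℕ),
    qbinom (a+1) (b+1) = X ^ (a - b) * qbinom a b + qbinom a (b+1)
  | 0, 0 => by simp [qbinom]
  | 0, b+1 => by simp [qbinom]
  | a+1, 0 => by
      rw [qbinom_succ_succ (a+1) 0]
      nth_rewrite 1 [qbinom_succ_succ' a 0]
      rw [qbinom_succ_succ a 0]
      simp only [qbinom_zero_right, Nat.sub_zero]
      ring
  | a+1, c+1 => by
      by_cases h : c + 1 ≤ a
      · rw [qbinom_succ_succ (a+1) (c+1)]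
        nth_rewrite 1 [qbinom_succ_succ' a c]
        nth_rewrite 1 [qbinom_succ_succ' a (c+1)]
        rw [qbinom_succ_succ a c, qbinom_succ_succ a (c+1),
          show a + 1 - (c+1) = a - c from by omega]
        have key : (X : Polynomial ℤ)^(c+1+1) * X^(a-(c+1)) = X^(a-c) * X^(c+1) := by
          rw [← pow_add, ← pow_add]; congr 1; omega
        linear_combination qbinom a (c+1) * key
      · rw [qbinom_succ_succ (a+1) (c+1),
          qbinom_eq_zero (show a+1 < c+1+1 by omega),
          show a + 1 - (c+1) = 0 from by omega]
        ring

lemma qbinom_symm : ∀ (a b : ℕ), b ≤ a → qbinom a (a - b) = qbinom a b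
  | 0, 0, _ => rfl
  | a+1, 0, _ => by
      rw [Nat.sub_zero, qbinom_self, qbinom_zero_right]
  | a+1, c+1, hb => by
      by_cases h : c + 1 ≤ a
      · rw [show a + 1 - (c+1) = (a - (c+1)) + 1 from by omega,
          qbinom_succ_succ' a (a - (c+1)),
          show a - (a - (c+1)) = c + 1 from by omega,
          qbinom_symm a (c+1) h,
          show a - (c+1) + 1 = a - c from by omega,
          qbinom_symm a c (by omega),
          qbinom_succ_succ a c]
        ring
      · rw [show c + 1 = a + 1 from by omega]
        rw [Nat.sub_self, qbinom_self, qbinom_zero_right]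

lemma gauss (c : Polynomial ℤ) (m : ℕ) :
    ∑ k ∈ Finset.range (m+1), c^k * X^(k.choose 2) * qbinom m k
      = ∏ i ∈ Finset.range m, (1 + c * X^i) := by
  induction m with
  | zero => simp [qbinom]
  | succ m ih =>
    rw [Finset.prod_range_succ, ← ih, Finset.sum_range_succ']
    have hterm : ∀ k ∈ Finset.range (m+1),
        c^(k+1) * X^((k+1).choose 2) * qbinom (m+1) (k+1)
          = (c * X^m) * (c^k * X^(k.choose 2) * qbinom m k)
            + c^(k+1) * X^((k+1).choose 2) * qbinom m (k+1) := by
      intro k hk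
      rw [Finset.mem_range] at hk
      rw [qbinom_succ_succ' m k]
      have h2 : (k+1).choose 2 = k.choose 2 + k := by
        rw [Nat.choose_two_right, Nat.choose_two_right, Nat.triangle_succ]
      have h3 : (X:Polynomial ℤ)^((k+1).choose 2) * X^(m-k) = X^m * X^(k.choose 2) := by
        rw [← pow_add, ← pow_add]; congr 1; omega
      linear_combination (c^(k+1) * qbinom m k) * h3
    rw [Finset.sum_congr rfl hterm, Finset.sum_add_distrib]
    have hshift : ∑ k ∈ Finset.range (m+1), c^(k+1) * X^((k+1).choose 2) * qbinom m (k+1)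
        = (∑ k ∈ Finset.range (m+1), c^k * X^(k.choose 2) * qbinom m k) - 1 := by
      have h1 := Finset.sum_range_succ' (fun k => c^k * X^(k.choose 2) * qbinom m k) (m+1)
      have h2 := Finset.sum_range_succ (fun k => c^k * X^(k.choose 2) * qbinom m k) (m+1)
      simp only [qbinom_eq_zero (Nat.lt_succ_self m), qbinom_zero_right, pow_zero,
        show Nat.choose 0 2 = 0 from rfl, mul_zero, mul_one, one_mul, add_zero] at h1 h2
      linear_combination h2 - h1
    rw [hshift]
    simp only [qbinom_zero_right, pow_zero, mul_one, one_mul]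
    have : (Nat.choose 0 2) = 0 := rfl
    rw [this, pow_zero]
    rw [← Finset.mul_sum]
    ring

lemma key (n : ℕ) :
    ∑ j ∈ (Finset.range (n+2)).filter (fun j => j % 2 = n % 2),
        X^(j.choose 2) * qbinom (n+1) j
      = ∏ i ∈ Finset.Icc 1 n, (1 + (X : Polynomial ℤ)^i) := by
  have hA := gauss 1 (n+1)
  have hB := gauss (-1) (n+1)
  have hB0 : ∏ i ∈ Finset.range (n+1), (1 + (-1) * (X : Polynomial ℤ)^i) = 0 := by
    apply Finset.prod_eq_zero (Finset.mem_range.mpr (show 0 < n+1 by omega))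
    simp
  have hA0 : ∏ i ∈ Finset.range (n+1), (1 + 1 * (X : Polynomial ℤ)^i)
      = 2 * ∏ i ∈ Finset.Icc 1 n, (1 + (X : Polynomial ℤ)^i) := by
    rw [Finset.prod_range_succ' (fun i => 1 + 1 * (X : Polynomial ℤ)^i) n]
    rw [show Finset.Icc 1 n = Finset.Ico 1 (n+1) from (Finset.Ico_add_one_right_eq_Icc 1 n).symm,
      Finset.prod_Ico_eq_prod_range]
    simp only [pow_zero, one_mul, Nat.add_sub_cancel]
    rw [mul_comm]
    congr 1
    · norm_num
    · apply Finset.prod_congr rfl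
      intro x _
      rw [Nat.add_comm]
  have hsum : (∑ k ∈ Finset.range (n+2), (1:Polynomial ℤ)^k * X^(k.choose 2) * qbinom (n+1) k)
        + (-1)^n * ∑ k ∈ Finset.range (n+2), (-1:Polynomial ℤ)^k * X^(k.choose 2) * qbinom (n+1) k
      = 2 * ∑ j ∈ (Finset.range (n+2)).filter (fun j => j % 2 = n % 2),
          X^(j.choose 2) * qbinom (n+1) j := by
    rw [Finset.mul_sum, Finset.mul_sum, Finset.sum_filter, ← Finset.sum_add_distrib]
    apply Finset.sum_congr rfl
    intro k hk
    rw [one_pow]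
    by_cases hp : k % 2 = n % 2
    · rw [if_pos hp]
      have hpar : (-1 : Polynomial ℤ)^n * (-1)^k = 1 := by
        rw [← pow_add]
        exact Even.neg_one_pow (Nat.even_iff.mpr (by omega))
      linear_combination (X^(k.choose 2) * qbinom (n+1) k) * hpar
    · rw [if_neg hp]
      have hpar : (-1 : Polynomial ℤ)^n * (-1)^k = -1 := by
        rw [← pow_add]
        exact Odd.neg_one_pow (Nat.odd_iff.mpr (by omega))
      linear_combination (X^(k.choose 2) * qbinom (n+1) k) * hpar
  have h2 : (2 : Polynomial ℤ) * (∑ j ∈ (Finset.range (n+2)).filter (fun j => j % 2 = n % 2),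
        X^(j.choose 2) * qbinom (n+1) j)
      = 2 * ∏ i ∈ Finset.Icc 1 n, (1 + (X : Polynomial ℤ)^i) := by
    rw [← hsum, hA, hB, hB0, hA0]
    ring
  exact mul_left_cancel₀ (by norm_num : (2 : Polynomial ℤ) ≠ 0) h2

/-- `∏_{i=1}^{n} (1+q^i) = 1 + ∑_{i odd, 1 ≤ i ≤ n} q^i ∑_{j=0}^{n-i} q^{C(j+1,2)} qbinom(i+j, i)`. -/
theorem lagrangian_hilbert_identity (n : ℕ) :
    ∏ i ∈ Finset.Icc 1 n, (1 + (X : Polynomial ℤ) ^ i)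
      = 1 + ∑ i ∈ (Finset.Icc 1 n).filter (fun i => Odd i),
          X ^ i * ∑ j ∈ Finset.range (n - i + 1),
            X ^ (Nat.choose (j + 1) 2) * qbinom (i + j) i := by
  induction n with
  | zero => simp
  | succ n ih =>
    have hstep :
        ∑ i ∈ (Finset.Icc 1 (n+1)).filter (fun i => Odd i),
            X ^ i * ∑ j ∈ Finset.range (n + 1 - i + 1),
              X ^ (Nat.choose (j + 1) 2) * qbinom (i + j) i
          = (∑ i ∈ (Finset.Icc 1 n).filter (fun i => Odd i),
              X ^ i * ∑ j ∈ Finset.range (n - i + 1),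
                X ^ (Nat.choose (j + 1) 2) * qbinom (i + j) i)
            + X ^ (n+1) * ∏ i ∈ Finset.Icc 1 n, (1 + (X : Polynomial ℤ) ^ i) := by
      -- split off the top term j = n+1-i of each inner sum
      have h1 : ∀ i ∈ (Finset.Icc 1 (n+1)).filter (fun i => Odd i),
          X ^ i * ∑ j ∈ Finset.range (n + 1 - i + 1),
              X ^ (Nat.choose (j + 1) 2) * qbinom (i + j) i
            = (X ^ i * ∑ j ∈ Finset.range (n + 1 - i),
                X ^ (Nat.choose (j + 1) 2) * qbinom (i + j) i)
              + X ^ i * (X ^ (Nat.choose (n + 1 - i + 1) 2) * qbinom (n+1) i) := by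
        intro i hi
        simp only [Finset.mem_filter, Finset.mem_Icc] at hi
        rw [Finset.sum_range_succ, show i + (n + 1 - i) = n + 1 from by omega, mul_add]
      rw [Finset.sum_congr rfl h1, Finset.sum_add_distrib]
      congr 1
      -- first part equals the n-sum
      · rw [← Finset.sum_subset (show (Finset.Icc 1 n).filter (fun i => Odd i)
              ⊆ (Finset.Icc 1 (n+1)).filter (fun i => Odd i) by
            apply Finset.filter_subset_filter
            exact Finset.Icc_subset_Icc_right (by omega))]
        · apply Finset.sum_congr rfl
          intro i hi
          simp only [Finset.mem_filter, Finset.mem_Icc] at hi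
          rw [show n + 1 - i = n - i + 1 from by omega]
        · intro i hi hni
          simp only [Finset.mem_filter, Finset.mem_Icc] at hi hni
          have : i = n + 1 := by
            rcases hi with ⟨⟨h1', h2'⟩, h3'⟩
            by_contra hne
            exact hni ⟨⟨h1', by omega⟩, h3'⟩
          rw [this]
          simp
      -- second part: reindex j = n+1-i and apply key
      · rw [← key n, Finset.mul_sum]
        apply Finset.sum_nbij' (fun i => n + 1 - i) (fun j => n + 1 - j)
        · intro a ha
          simp only [Finset.mem_filter, Finset.mem_Icc, Finset.mem_range] at ha ⊢
          rw [Nat.odd_iff] at ha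
          omega
        · intro b hb
          simp only [Finset.mem_filter, Finset.mem_Icc, Finset.mem_range] at hb ⊢
          rw [Nat.odd_iff]
          omega
        · intro a ha
          simp only [Finset.mem_filter, Finset.mem_Icc] at ha
          omega
        · intro b hb
          simp only [Finset.mem_filter, Finset.mem_range] at hb
          omega
        · intro a ha
          simp only [Finset.mem_filter, Finset.mem_Icc] at ha
          rw [Nat.odd_iff] at ha
          -- goal: X^a * (X^(C(n+1-a+1,2)) * qbinom (n+1) a)
          --     = X^(n+1) * (X^(C(n+1-a,2)) * qbinom (n+1) (n+1-a))
          rw [qbinom_symm (n+1) a (by omega)]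
          have hc : Nat.choose (n + 1 - a + 1) 2 = Nat.choose (n + 1 - a) 2 + (n + 1 - a) := by
            rw [Nat.choose_two_right, Nat.choose_two_right, Nat.triangle_succ]
          have hx : (X : Polynomial ℤ) ^ a * X ^ (Nat.choose (n + 1 - a + 1) 2)
              = X ^ (n+1) * X ^ (Nat.choose (n + 1 - a) 2) := by
            rw [← pow_add, ← pow_add]
            congr 1
            omega
          linear_combination qbinom (n+1) a * hx
    rw [Finset.prod_Icc_succ_top (show 1 ≤ n + 1 by omega), hstep, ih]
    ring
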